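/- arXiv:1310.2958 — 2 statements merged into one kernel-verified Lean document; each statement's English description precedes it below -/
import Mathlib

section
/- Let f ∈ 𝔽_q[x] be a single-variable polynomial of degree d > 0 over the finite field 𝔽_q. If the value set V_f = f(𝔽_q) satisfies |V_f| < q (i.e., f is not a permutation polynomial), then |V_f| ≤ q − (q−1)/d (an inequality of real numbers). -/
open Polynomial Finset

section aux

variable {F : Type} [Field F] [Fintype F]

private lemma natDegree_msum_le (s : Multiset (Polynomial F)) (n : ℕ)
    (h : ∀ p ∈ s, Polynomial.natDegree p ≤ n) : s.sum.natDegree ≤ n := by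
  induction s using Multiset.induction with
  | empty => simp
  | cons a s ih =>
    rw [Multiset.sum_cons]
    exact (Polynomial.natDegree_add_le _ _).trans
      (max_le (h a (Multiset.mem_cons_self _ _))
        (ih fun p hp => h p (Multiset.mem_cons_of_mem hp)))

private lemma natDegree_mprod_le (s : Multiset (Polynomial F)) (n : ℕ)
    (h : ∀ p ∈ s, Polynomial.natDegree p ≤ n) :
    s.prod.natDegree ≤ Multiset.card s * n := by
  refine (Polynomial.natDegree_multiset_prod_le _).trans ?_
  have := Multiset.sum_le_card_nsmul (s.map Polynomial.natDegree) n ?_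
  · simpa [smul_eq_mul] using this
  · intro x hx
    obtain ⟨p, hp, rfl⟩ := Multiset.mem_map.mp hx
    exact h p hp

/-- Key lemma: the `k`-th elementary symmetric function of the multiset of values
of a polynomial `g` vanishes, provided `k ≥ 1`, `k ≤ q-2` and `k * deg g ≤ q - 2`. -/
private lemma esymm_map_eval_eq_zero (g : Polynomial F) (k : ℕ) (hk : 0 < k)
    (hk2 : k ≤ Fintype.card F - 2) (hkd : k * g.natDegree ≤ Fintype.card F - 2) :
    (Finset.univ.val.map fun a : F => g.eval a).esymm k = 0 := by
  classical
  have hq2 : 2 ≤ Fintype.card F := Fintype.one_lt_card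
  set q : ℕ := Fintype.card F with hq
  set e : F := (Finset.univ.val.map fun a : F => g.eval a).esymm k with he
  set Mg : Multiset (Polynomial F) :=
    Finset.univ.val.map (fun a : F => g.comp (Polynomial.C a * Polynomial.X)) with hMg
  set E : Polynomial F := ((Mg.powersetCard k).map Multiset.prod).sum with hE
  clear_value Mg E
  have hEeval : ∀ c : F,
      E.eval c = (Finset.univ.val.map fun a : F => g.eval (a * c)).esymm k := by
    intro c
    have hmm : (Finset.univ.val.map fun a : F => g.eval (a * c))
        = Mg.map (Polynomial.eval c) := by
      rw [hMg, Multiset.map_map]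
      exact Multiset.map_congr rfl (fun a _ => by simp [Polynomial.eval_comp])
    have h1 := map_multiset_sum (Polynomial.evalRingHom c)
      ((Multiset.powersetCard k Mg).map Multiset.prod)
    rw [Polynomial.coe_evalRingHom] at h1
    have h2 : (Multiset.map (Polynomial.eval c)
          ((Multiset.powersetCard k Mg).map Multiset.prod)).sum
        = (Multiset.map (fun A : Multiset (Polynomial F) =>
            (Multiset.map (Polynomial.eval c) A).prod) (Multiset.powersetCard k Mg)).sum := by
      rw [Multiset.map_map]
      exact congrArg Multiset.sum (Multiset.map_congr rfl (fun A _ => by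
        simp [Polynomial.eval_multiset_prod]))
    have h3 : (Multiset.map (fun A : Multiset (Polynomial F) =>
            (Multiset.map (Polynomial.eval c) A).prod) (Multiset.powersetCard k Mg)).sum
        = (Multiset.map Multiset.prod
            (Multiset.powersetCard k (Mg.map (Polynomial.eval c)))).sum := by
      rw [Multiset.powersetCard_map, Multiset.map_map]
      rfl
    rw [hE, h1, h2, h3, hmm]
    rfl
  have hscale : ∀ c : F, c ≠ 0 →
      (Finset.univ.val.map fun a : F => g.eval (a * c))
        = Finset.univ.val.map fun a : F => g.eval a := by
    intro c hc
    have h1 : (Finset.univ.val.map fun a : F => a * c) = Finset.univ.val := by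
      have h2 := Finset.map_univ_equiv (Equiv.mulRight₀ c hc)
      have h3 := congrArg Finset.val h2
      simpa [Finset.map] using h3
    conv_rhs => rw [← h1]
    rw [Multiset.map_map]
    rfl
  have hdegE : E.natDegree ≤ k * g.natDegree := by
    rw [hE]
    refine natDegree_msum_le _ _ ?_
    intro P hP
    obtain ⟨A, hA, rfl⟩ := Multiset.mem_map.mp hP
    obtain ⟨hle, hcard⟩ := Multiset.mem_powersetCard.mp hA
    have := natDegree_mprod_le A g.natDegree ?_
    · rw [hcard] at this; exact this
    · intro p hp
      have hpMg : p ∈ Mg := Multiset.mem_of_le hle hp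
      rw [hMg] at hpMg
      obtain ⟨a, _, rfl⟩ := Multiset.mem_map.mp hpMg
      refine (Polynomial.natDegree_comp_le).trans ?_
      have : (Polynomial.C a * Polynomial.X : Polynomial F).natDegree ≤ 1 :=
        (Polynomial.natDegree_C_mul_le a Polynomial.X).trans Polynomial.natDegree_X_le
      calc g.natDegree * (Polynomial.C a * Polynomial.X : Polynomial F).natDegree
          ≤ g.natDegree * 1 := Nat.mul_le_mul_left _ this
        _ = g.natDegree := by ring
  have hEc : E = Polynomial.C e := by
    by_contra hne
    set P : Polynomial F := E - Polynomial.C e with hP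
    have hP0 : P ≠ 0 := sub_ne_zero.mpr hne
    have hroots : Finset.univ.erase (0 : F) ⊆ P.roots.toFinset := by
      intro c hc
      have hc0 : c ≠ 0 := (Finset.mem_erase.mp hc).1
      have : P.eval c = 0 := by
        simp [hP, hEeval c, hscale c hc0, he]
      simpa [Multiset.mem_toFinset, Polynomial.mem_roots'] using And.intro hP0 this
    have h1 : q - 1 ≤ P.roots.toFinset.card := by
      have := Finset.card_le_card hroots
      simpa [Finset.card_erase_of_mem, Finset.card_univ] using this
    have h2 : P.roots.toFinset.card ≤ P.natDegree := by
      exact le_trans (Multiset.toFinset_card_le _) (Polynomial.card_roots' P)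
    have h3 : P.natDegree ≤ k * g.natDegree := by
      refine (Polynomial.natDegree_sub_le _ _).trans ?_
      simpa using hdegE
    omega
  have h0 : E.eval 0 = e := by rw [hEc]; simp
  have h0' : E.eval 0 = ((q.choose k : ℕ) : F) * (g.eval 0) ^ k := by
    rw [hEeval 0]
    have hrep : (Finset.univ.val.map fun a : F => g.eval (a * 0))
        = Multiset.replicate q (g.eval 0) := by
      simp only [mul_zero]
      rw [Multiset.map_const']
      congr 1
    rw [hrep]
    show ((Multiset.replicate q (g.eval 0)).powersetCard k |>.map Multiset.prod).sum = _
    have hall : ∀ A ∈ (Multiset.replicate q (g.eval 0)).powersetCard k,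
        A.prod = (g.eval 0) ^ k := by
      intro A hA
      obtain ⟨hle, hcard⟩ := Multiset.mem_powersetCard.mp hA
      have hA' : A = Multiset.replicate k (g.eval 0) := by
        rw [← hcard]
        exact Multiset.eq_replicate_card.mpr
          (fun b hb => Multiset.eq_of_mem_replicate (Multiset.mem_of_le hle hb))
      rw [hA', Multiset.prod_replicate]
    rw [Multiset.map_congr rfl hall, Multiset.map_const', Multiset.sum_replicate,
      Multiset.card_powersetCard, Multiset.card_replicate]
    simp [nsmul_eq_mul]
  have hchoose : ((q.choose k : ℕ) : F) = 0 := by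
    obtain ⟨n, hp, hcard⟩ := FiniteField.card F (ringChar F)
    have hdvd : ringChar F ∣ q.choose k := by
      rw [hq, hcard]
      exact Nat.Prime.dvd_choose_pow hp hk.ne' (by omega)
    exact (CharP.cast_eq_zero_iff F (ringChar F) _).mpr hdvd
  rw [h0', hchoose, zero_mul] at h0
  exact h0.symm

end aux

/-- **Theorem (Wan's bound, Theorem 3.1).** Let `f ∈ 𝔽_q[x]` be a single-variable
polynomial of degree `d > 0`. If the value set `V_f = f(𝔽_q)` satisfies `|V_f| < q`,
then `|V_f| ≤ q - (q-1)/d`. -/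
theorem value_set_le_sub_div (q : ℕ) (F : Type) [Field F] [Fintype F]
    (hF : Fintype.card F = q)
    (f : Polynomial F) (d : ℕ) (hdeg : f.natDegree = d) (hd : 0 < d)
    (V : Set F) (hV : V = Set.range fun a => f.eval a)
    (hlt : V.ncard < q) :
    (V.ncard : ℝ) ≤ q - (q - 1) / d := by
  classical
  subst hV hF hdeg
  set q : ℕ := Fintype.card F with hq
  set d : ℕ := f.natDegree with hdd
  have hq2 : 2 ≤ q := Fintype.one_lt_card
  set Vs : Finset F := Finset.image (fun a => f.eval a) Finset.univ with hVs
  have hncard : (Set.range fun a => f.eval a).ncard = Vs.card := by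
    rw [← Set.image_univ, ← Finset.coe_univ, ← Finset.coe_image, Set.ncard_coe_finset]
  rw [hncard] at hlt ⊢
  set r : ℕ := Vs.card with hr
  -- the main counting inequality, in ℕ
  have main : q - 1 ≤ (q - r) * d := by
    by_contra hcon
    push_neg at hcon
    set s : ℕ := q - r with hs
    have hs1 : 1 ≤ s := by omega
    have hsd : s * d ≤ q - 2 := by omega
    have hsq : s ≤ q - 2 := by
      calc s = s * 1 := by ring
        _ ≤ s * d := Nat.mul_le_mul_left _ hd
        _ ≤ q - 2 := hsd
    -- the value multiset, negated
    set Mw : Multiset F := Finset.univ.val.map fun a : F => -(f.eval a) with hMw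
    clear_value Mw
    have hMwcard : Multiset.card Mw = q := by
      simp [hMw, Finset.card_univ, hq]
    have hesymm : ∀ j : ℕ, 1 ≤ j → j ≤ s → Mw.esymm j = 0 := by
      intro j hj1 hjs
      have h1 : Mw = Finset.univ.val.map fun a : F => (-f).eval a := by
        simp [hMw]
      rw [h1]
      refine esymm_map_eval_eq_zero (-f) j hj1 (by omega) ?_
      rw [Polynomial.natDegree_neg]
      calc j * f.natDegree ≤ s * f.natDegree := Nat.mul_le_mul_right _ hjs
        _ ≤ q - 2 := hsd
    set G : Polynomial F := (Mw.map fun a : F => Polynomial.X + Polynomial.C a).prod with hG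
    clear_value G
    have hGdeg : G.natDegree ≤ q := by
      rw [hG]
      have := natDegree_mprod_le (Mw.map fun a : F => Polynomial.X + Polynomial.C a) 1 ?_
      · simpa [hMwcard] using this
      · intro p hp
        obtain ⟨a, _, rfl⟩ := Multiset.mem_map.mp hp
        exact le_of_eq (Polynomial.natDegree_X_add_C a)
    set Gb : Polynomial F := G - (Polynomial.X ^ q - Polynomial.X) with hGb
    clear_value Gb
    -- degree bound for Gb
    have hGbdeg : Gb.natDegree ≤ q - s - 1 := by
      rw [Polynomial.natDegree_le_iff_coeff_eq_zero]
      intro N hN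
      rcases lt_trichotomy N q with hNq | hNq | hNq
      · -- q - s ≤ N ≤ q - 1
        have hNle : N ≤ Multiset.card Mw := by omega
        have hcoeffG : G.coeff N = Mw.esymm (Multiset.card Mw - N) := by
          rw [hG]
          exact Multiset.prod_X_add_C_coeff Mw hNle
        have hj1 : 1 ≤ Multiset.card Mw - N := by omega
        have hjs : Multiset.card Mw - N ≤ s := by omega
        have hN1 : ¬ ((1:ℕ) = N) := by omega
        have hN1' : ¬ (N = 1) := by omega
        have hNq' : ¬ (q = N) := by omega
        have hNq'' : ¬ (N = q) := by omega
        simp [hGb, Polynomial.coeff_sub, hcoeffG, hesymm _ hj1 hjs,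
          Polynomial.coeff_X_pow, hNq', hNq'', Polynomial.coeff_X, hN1, hN1']
      · -- N = q
        have hNle : N ≤ Multiset.card Mw := by omega
        have hcoeffG : G.coeff N = Mw.esymm (Multiset.card Mw - N) := by
          rw [hG]
          exact Multiset.prod_X_add_C_coeff Mw hNle
        have hsub0 : Multiset.card Mw - N = 0 := by omega
        rw [hsub0, hNq] at hcoeffG
        have hes1 : Mw.esymm 0 = 1 := by
          simp [Multiset.esymm, Multiset.powersetCard_zero_left]
        have hq1 : ¬ ((1:ℕ) = q) := by omega
        rw [hGb, hNq]
        simp [Polynomial.coeff_sub, hcoeffG, hes1,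
          Polynomial.coeff_X_pow, Polynomial.coeff_X, hq1]
      · -- N > q
        have h1 : G.coeff N = 0 := Polynomial.coeff_eq_zero_of_natDegree_lt (by omega)
        have hN1 : ¬ ((1:ℕ) = N) := by omega
        have hN1' : ¬ (N = 1) := by omega
        have hNq' : ¬ (q = N) := by omega
        have hNq'' : ¬ (N = q) := by omega
        simp [hGb, Polynomial.coeff_sub, h1, Polynomial.coeff_X_pow, hNq', hNq'',
          Polynomial.coeff_X, hN1, hN1']
    -- Gb is nonzero
    have hGeval : ∀ v : F, G.eval v = (Multiset.map (fun a : F => v - f.eval a)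
        Finset.univ.val).prod := by
      intro v
      rw [hG, Polynomial.eval_multiset_prod, Multiset.map_map, hMw, Multiset.map_map]
      exact congrArg Multiset.prod (Multiset.map_congr rfl (fun a _ => by
        simp [Function.comp, sub_eq_add_neg]))
    have hGb0 : Gb ≠ 0 := by
      have hVsub : Vs ⊂ Finset.univ := by
        refine Finset.ssubset_iff_of_subset (Finset.subset_univ _) |>.mpr ?_
        by_contra hcon2
        push_neg at hcon2
        have : Finset.univ ⊆ Vs := fun x hx => hcon2 x hx
        have := Finset.card_le_card this
        rw [Finset.card_univ] at this
        omega
      obtain ⟨w, hwu, hwVs⟩ := Finset.exists_of_ssubset hVsub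
      intro hzero
      have hevalw : Gb.eval w = 0 := by rw [hzero]; simp
      rw [hGb] at hevalw
      simp only [Polynomial.eval_sub, Polynomial.eval_pow, Polynomial.eval_X] at hevalw
      rw [hq, FiniteField.pow_card w] at hevalw
      rw [sub_self, sub_zero, hGeval w] at hevalw
      have : ∃ x ∈ Multiset.map (fun a : F => w - f.eval a) Finset.univ.val, x = 0 :=
        Multiset.prod_eq_zero_iff.mp hevalw |> fun h => ⟨0, h, rfl⟩
      obtain ⟨x, hx, rfl⟩ := this
      obtain ⟨a, _, ha⟩ := Multiset.mem_map.mp hx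
      have : w = f.eval a := by rwa [sub_eq_zero] at ha
      exact hwVs (by rw [hVs]; exact Finset.mem_image.mpr ⟨a, Finset.mem_univ a, this.symm⟩)
    -- every value is a root of Gb
    have hroots : Vs ⊆ Gb.roots.toFinset := by
      intro v hv
      obtain ⟨a, _, rfl⟩ := Finset.mem_image.mp hv
      have hGv : G.eval (f.eval a) = 0 := by
        rw [hGeval]
        refine Multiset.prod_eq_zero ?_
        refine Multiset.mem_map.mpr ⟨a, Finset.mem_univ a, by ring⟩
      have : Gb.eval (f.eval a) = 0 := by
        rw [hGb]
        simp only [Polynomial.eval_sub, Polynomial.eval_pow, Polynomial.eval_X]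
        rw [hq, FiniteField.pow_card, hGv]
        ring
      simpa [Multiset.mem_toFinset, Polynomial.mem_roots'] using And.intro hGb0 this
    have hcount : r ≤ q - s - 1 := by
      calc r ≤ Gb.roots.toFinset.card := Finset.card_le_card hroots
        _ ≤ Multiset.card Gb.roots := Multiset.toFinset_card_le _
        _ ≤ Gb.natDegree := Polynomial.card_roots' Gb
        _ ≤ q - s - 1 := hGbdeg
    omega
  -- translate to the real inequality
  have hrq : r ≤ q := hlt.le
  have hd0 : (0 : ℝ) < (d : ℝ) := by exact_mod_cast hd
  have hmain' : ((q : ℝ) - 1) ≤ ((q : ℝ) - (r : ℝ)) * (d : ℝ) := by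
    have h1 : ((q - 1 : ℕ) : ℝ) ≤ (((q - r) * d : ℕ) : ℝ) := by exact_mod_cast main
    rw [Nat.cast_mul, Nat.cast_sub hrq, Nat.cast_sub (by omega : 1 ≤ q)] at h1
    simpa using h1
  have hdiv : ((q : ℝ) - 1) / (d : ℝ) ≤ (q : ℝ) - (r : ℝ) := by
    rw [div_le_iff₀ hd0]
    exact hmain'
  linarith
end

section
/- Let q be a prime power, n ≥ 1, let f = (f₁,…,fₙ) be a polynomial vector with each fᵢ ∈ 𝔽_q[x₁,…,xₙ], let K be a field extension of 𝔽_q with [K : 𝔽_q] = n (so |K| = qⁿ), fix an 𝔽_q-basis e₁,…,eₙ of K, and set g = f₁e₁ + ⋯ + fₙeₙ ∈ K[x₁,…,xₙ]. Let ĝ ∈ W(K)[x₁,…,xₙ] be the lift of g obtained by applying the Teichmüller map τ : K → W(K) to each coefficient. Then for every positive integer k with k < μ_f·(q−1) and k < q, the sum ∑_{(x₁,…,xₙ) ∈ 𝔽_qⁿ} ĝ(τ(x₁),…,τ(xₙ))^k is divisible by p·k in W(K), where each xᵢ ∈ 𝔽_q is regarded as an element of K. Consequently, the least positive integer k for which this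 divisibility fails (when it exists) satisfies U(g) ≥ min{μ_f·(q−1), q}. -/
open MvPolynomial Pointwise ENNReal

set_option maxHeartbeats 2000000 in
/-- **Lemma 5.2.** Let `q = p^r` be a prime power, `n ≥ 1`, `f = (f₁,…,fₙ)` a polynomial
vector over `𝔽_q`, `K/𝔽_q` an extension of degree `n` with basis `e₁,…,eₙ` (given by `b`),
and `g = f₁e₁ + ⋯ + fₙeₙ ∈ K[x₁,…,xₙ]`.  `Δ` is the Newton polytope of `f`, and
`μ ∈ ℝ≥0∞` is the infimum of the set of positive real dilation factors `k` such that
`kΔ` contains a lattice point with all coordinates strictly positive (`μ = ∞` when no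
such `k` exists).  `T x` denotes the coefficientwise Teichmüller lift `ĝ` of `g`
evaluated at `(τ(x₁),…,τ(xₙ))` in `W(K)`.  Then for every positive integer `k` with
`k < μ·(q-1)` and `k < q`, the sum `∑_{x ∈ 𝔽_qⁿ} ĝ(τ(x₁),…,τ(xₙ))^k` is divisible by
`p·k` in `W(K)`; consequently any positive `k` for which this divisibility fails
satisfies `k ≥ min {μ·(q-1), q}`, i.e. `U(g) ≥ min {μ_f(q-1), q}`. -/
theorem U_g_ge_min_polytope (p r q : ℕ) [Fact p.Prime] (hr : 0 < r) (hq : q = p ^ r)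
    (F : Type) [Field F] [Fintype F] [CharP F p] (hF : Fintype.card F = q)
    (n : ℕ) (hn : 1 ≤ n)
    (K : Type) [Field K] [CharP K p] [Algebra F K] (hK : Module.finrank F K = n)
    (b : Module.Basis (Fin n) F K)
    (f : Fin n → MvPolynomial (Fin n) F)
    (g : MvPolynomial (Fin n) K)
    (hg : g = ∑ i, MvPolynomial.C (b i) * MvPolynomial.map (algebraMap F K) (f i))
    (Δ : Set (Fin n → ℝ))
    (hΔ : Δ = convexHull ℝ
      ({0} ∪ ⋃ i, (fun v : Fin n →₀ ℕ => fun j => (v j : ℝ)) '' ((f i).support : Set (Fin n →₀ ℕ))))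
    (μ : ℝ≥0∞)
    (hμ : μ = sInf {k : ℝ≥0∞ | 0 < k ∧ k ≠ ⊤ ∧
      ∃ v : Fin n → ℤ, (∀ j, 0 < v j) ∧ (fun j => (v j : ℝ)) ∈ k.toReal • Δ})
    (T : (Fin n → F) → WittVector p K)
    (hT : ∀ x, T x = ∑ v ∈ g.support,
      WittVector.teichmuller p (MvPolynomial.coeff v g) *
        ∏ i, WittVector.teichmuller p (algebraMap F K (x i)) ^ v i) :
    (∀ k : ℕ, 0 < k → (k : ℝ≥0∞) < μ * ((q : ℝ≥0∞) - 1) → k < q →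
      ((p * k : ℕ) : WittVector p K) ∣ ∑ x : Fin n → F, T x ^ k) ∧
    (∀ k : ℕ, 0 < k → ¬ ((p * k : ℕ) : WittVector p K) ∣ (∑ x : Fin n → F, T x ^ k) →
      min (μ * ((q : ℝ≥0∞) - 1)) (q : ℝ≥0∞) ≤ (k : ℝ≥0∞)) := by
  classical
  have hp : p.Prime := Fact.out
  have hq2 : 2 ≤ q := by
    rw [hq]
    calc 2 ≤ p := hp.two_le
    _ = p ^ 1 := (pow_one p).symm
    _ ≤ p ^ r := Nat.pow_le_pow_right hp.pos hr
  have main : ∀ k : ℕ, 0 < k → (k : ℝ≥0∞) < μ * ((q : ℝ≥0∞) - 1) → k < q →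
      ((p * k : ℕ) : WittVector p K) ∣ ∑ x : Fin n → F, T x ^ k := by
    intro k hk hkμ hkq
    -- the character sum
    set W : ℕ → WittVector p K :=
      fun m => ∑ y : F, WittVector.teichmuller p (algebraMap F K y) ^ m with hW
    have hw0 : W 0 = (q : WittVector p K) := by
      simp [hW, Finset.card_univ, hF]
    have hw_zero : ∀ m : ℕ, m ≠ 0 → ¬ (q - 1) ∣ m → W m = 0 := by
      intro m hm hnd
      obtain ⟨ζ, hζ⟩ := IsCyclic.exists_generator (α := Fˣ)
      have hordζ : orderOf ζ = q - 1 := by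
        rw [orderOf_eq_card_of_forall_mem_zpowers hζ, Nat.card_eq_fintype_card,
          Fintype.card_units, hF]
      have hζm : (ζ : F) ^ m ≠ 1 := by
        intro h
        apply hnd
        rw [← hordζ]
        exact orderOf_dvd_of_pow_eq_one (Units.ext (by simpa using h))
      have hζ0 : (ζ : F) ≠ 0 := Units.ne_zero ζ
      have hbij : Function.Bijective (fun y : F => (ζ : F) * y) := by
        constructor
        · intro a c h
          exact mul_left_cancel₀ hζ0 h
        · intro c
          exact ⟨(ζ : F)⁻¹ * c, by field_simp⟩
      have hre : ∑ y : F, WittVector.teichmuller p (algebraMap F K ((ζ : F) * y)) ^ m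
          = ∑ y : F, WittVector.teichmuller p (algebraMap F K y) ^ m := by
        refine Fintype.sum_bijective _ hbij _ _ fun y => rfl
      have hshift : W m = WittVector.teichmuller p (algebraMap F K (ζ : F)) ^ m * W m := by
        rw [hW]
        calc ∑ y : F, WittVector.teichmuller p (algebraMap F K y) ^ m
            = ∑ y : F, WittVector.teichmuller p (algebraMap F K ((ζ : F) * y)) ^ m := hre.symm
          _ = ∑ y : F, WittVector.teichmuller p (algebraMap F K (ζ : F)) ^ m *
                WittVector.teichmuller p (algebraMap F K y) ^ m := by
              refine Finset.sum_congr rfl fun y _ => ?_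
              rw [map_mul, map_mul, mul_pow]
          _ = WittVector.teichmuller p (algebraMap F K (ζ : F)) ^ m *
                ∑ y : F, WittVector.teichmuller p (algebraMap F K y) ^ m :=
              (Finset.mul_sum _ _ _).symm
      have hcne : WittVector.teichmuller p (algebraMap F K (ζ : F)) ^ m ≠ 1 := by
        intro h
        rw [← map_pow, ← map_pow] at h
        have h0 := congrArg (fun z : WittVector p K => z.coeff 0) h
        simp only [WittVector.teichmuller_coeff_zero, WittVector.one_coeff_zero] at h0
        exact hζm ((algebraMap F K).injective (by rw [h0, map_one]))
      have hzero : (1 - WittVector.teichmuller p (algebraMap F K (ζ : F)) ^ m) * W m = 0 := by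
        rw [sub_mul, one_mul, ← hshift, sub_self]
      rcases mul_eq_zero.1 hzero with h | h
      · exact absurd (sub_eq_zero.1 h).symm hcne
      · exact h
    -- multinomial expansion
    have expand : ∑ x : Fin n → F, T x ^ k
        = ∑ t ∈ Fintype.piFinset (fun _ : Fin k => g.support),
            (∏ j, WittVector.teichmuller p (MvPolynomial.coeff (t j) g)) *
              ∏ i, W (∑ j, t j i) := by
      have h1 : ∀ x : Fin n → F, T x ^ k
          = ∑ t ∈ Fintype.piFinset (fun _ : Fin k => g.support),
              ∏ j, (WittVector.teichmuller p (MvPolynomial.coeff (t j) g) *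
                ∏ i, WittVector.teichmuller p (algebraMap F K (x i)) ^ (t j) i) := by
        intro x; rw [hT x, Finset.sum_pow']
      rw [Finset.sum_congr rfl fun x _ => h1 x, Finset.sum_comm]
      refine Finset.sum_congr rfl fun t ht => ?_
      have h2 : ∀ x : Fin n → F,
          (∏ j, (WittVector.teichmuller p (MvPolynomial.coeff (t j) g) *
            ∏ i, WittVector.teichmuller p (algebraMap F K (x i)) ^ (t j) i))
          = (∏ j, WittVector.teichmuller p (MvPolynomial.coeff (t j) g)) *
            ∏ i, WittVector.teichmuller p (algebraMap F K (x i)) ^ (∑ j, t j i) := by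
        intro x
        rw [Finset.prod_mul_distrib]
        congr 1
        rw [Finset.prod_comm]
        exact Finset.prod_congr rfl fun i _ => Finset.prod_pow_eq_pow_sum _ _ _
      rw [Finset.sum_congr rfl fun x _ => h2 x, ← Finset.mul_sum]
      congr 1
      rw [hW]
      exact (Fintype.prod_sum fun i y =>
        WittVector.teichmuller p (algebraMap F K y) ^ (∑ j, t j i)).symm
    -- every term is divisible by q
    have hterm : ∀ t ∈ Fintype.piFinset (fun _ : Fin k => g.support),
        (q : WittVector p K) ∣
          (∏ j, WittVector.teichmuller p (MvPolynomial.coeff (t j) g)) *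
            ∏ i, W (∑ j, t j i) := by
      intro t ht
      by_cases hzero : ∃ i, (∑ j, t j i) = 0
      · obtain ⟨i, hi⟩ := hzero
        have hd : W (∑ j, t j i) ∣ ∏ i, W (∑ j, t j i) :=
          Finset.dvd_prod_of_mem _ (Finset.mem_univ i)
        rw [hi, hw0] at hd
        exact hd.mul_left _
      push_neg at hzero
      by_cases hdvd : ∀ i, (q - 1) ∣ (∑ j, t j i)
      · -- geometric contradiction with k < μ (q-1)
        exfalso
        have hΔconv : Convex ℝ Δ := hΔ ▸ convex_convexHull ℝ _
        have hvert : ∀ v ∈ g.support, (fun i => ((v : Fin n →₀ ℕ) i : ℝ)) ∈ Δ := by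
          intro v hv
          rw [hΔ]
          apply subset_convexHull
          refine Set.mem_union_right _ ?_
          rw [Set.mem_iUnion]
          have hcoef : MvPolynomial.coeff v g ≠ 0 := MvPolynomial.mem_support_iff.1 hv
          have hex : ∃ i, MvPolynomial.coeff v (f i) ≠ 0 := by
            by_contra hall
            push_neg at hall
            apply hcoef
            rw [hg, MvPolynomial.coeff_sum]
            refine Finset.sum_eq_zero fun i _ => ?_
            rw [MvPolynomial.coeff_C_mul, MvPolynomial.coeff_map, hall, map_zero, mul_zero]
          obtain ⟨i, hi⟩ := hex
          exact ⟨i, ⟨v, MvPolynomial.mem_support_iff.2 hi, rfl⟩⟩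
        have hkR : (k : ℝ) ≠ 0 := Nat.cast_ne_zero.2 hk.ne'
        have havg : (fun i => ((∑ j, t j i : ℕ) : ℝ) / k) ∈ Δ := by
          have hmem := hΔconv.sum_mem (t := (Finset.univ : Finset (Fin k)))
            (w := fun _ => (k : ℝ)⁻¹)
            (z := fun j => fun i => ((t j) i : ℝ))
            (fun _ _ => by positivity)
            (by
              rw [Finset.sum_const, Finset.card_univ, Fintype.card_fin, nsmul_eq_mul]
              field_simp)
            (fun j _ => hvert (t j) (Fintype.mem_piFinset.1 ht j))
          convert hmem using 1
          funext i
          rw [Finset.sum_apply]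
          simp only [Pi.smul_apply, smul_eq_mul]
          rw [Nat.cast_sum, Finset.sum_div]
          exact Finset.sum_congr rfl fun j _ => by ring
        set c : ℝ≥0∞ := (k : ℝ≥0∞) / ((q : ℝ≥0∞) - 1) with hcdef
        have hq1 : ((q : ℝ≥0∞) - 1) = ((q - 1 : ℕ) : ℝ≥0∞) := by
          rw [ENNReal.natCast_sub, Nat.cast_one]
        have hq1ne0 : ((q : ℝ≥0∞) - 1) ≠ 0 := by
          rw [hq1]
          exact_mod_cast (by omega : ¬ (q - 1 : ℕ) = 0)
        have hq1netop : ((q : ℝ≥0∞) - 1) ≠ ⊤ := by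
          rw [hq1]; exact ENNReal.natCast_ne_top _
        have hq1R : ((q : ℝ) - 1) = ((q - 1 : ℕ) : ℝ) := by
          push_cast [Nat.cast_sub (by omega : 1 ≤ q)]; ring
        have hq1Rne0 : ((q - 1 : ℕ) : ℝ) ≠ 0 := Nat.cast_ne_zero.2 (by omega)
        have hctoReal : c.toReal = (k : ℝ) / ((q - 1 : ℕ) : ℝ) := by
          rw [hcdef, hq1, ENNReal.toReal_div, ENNReal.toReal_natCast, ENNReal.toReal_natCast]
        have hmemset : c ∈ {k : ℝ≥0∞ | 0 < k ∧ k ≠ ⊤ ∧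
            ∃ v : Fin n → ℤ, (∀ j, 0 < v j) ∧ (fun j => (v j : ℝ)) ∈ k.toReal • Δ} := by
          refine ⟨ENNReal.div_pos (by exact_mod_cast hk.ne') hq1netop, ?_, ?_⟩
          · exact (ENNReal.div_lt_top (ENNReal.natCast_ne_top _) hq1ne0).ne
          · refine ⟨fun i => (((∑ j, t j i) / (q - 1) : ℕ) : ℤ), fun i => ?_, ?_⟩
            · show (0 : ℤ) < (((∑ j, t j i) / (q - 1) : ℕ) : ℤ)
              have : 0 < (∑ j, t j i) / (q - 1) :=
                Nat.div_pos (Nat.le_of_dvd (Nat.pos_of_ne_zero (hzero i)) (hdvd i)) (by omega)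
              exact_mod_cast this
            · rw [Set.mem_smul_set]
              refine ⟨fun i => ((∑ j, t j i : ℕ) : ℝ) / k, havg, ?_⟩
              funext i
              simp only [Pi.smul_apply, smul_eq_mul, Int.cast_natCast]
              rw [hctoReal, Nat.cast_div (hdvd i) hq1Rne0, div_mul_div_comm,
                mul_comm ((q - 1 : ℕ) : ℝ) (k : ℝ), mul_div_mul_left _ _ hkR]
        have hμle : μ ≤ c := hμ ▸ sInf_le hmemset
        have hle : μ * ((q : ℝ≥0∞) - 1) ≤ c * ((q : ℝ≥0∞) - 1) := mul_le_mul_left hμle _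
        rw [hcdef, ENNReal.div_mul_cancel hq1ne0 hq1netop] at hle
        exact absurd (lt_of_lt_of_le hkμ hle) (lt_irrefl _)
      · push_neg at hdvd
        obtain ⟨i, hi⟩ := hdvd
        rw [Finset.prod_eq_zero (Finset.mem_univ i) (hw_zero _ (hzero i) hi), mul_zero]
        exact dvd_zero _
    have hqS : (q : WittVector p K) ∣ ∑ x : Fin n → F, T x ^ k := by
      rw [expand]
      exact Finset.dvd_sum hterm
    -- from q ∣ S and k < q conclude p k ∣ S
    obtain ⟨c, hc⟩ := hqS
    set s : ℕ := k.factorization p with hs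
    have hpk : p ^ s ∣ k := Nat.ordProj_dvd k p
    obtain ⟨u, hu⟩ := hpk
    have hune : ¬ p ∣ u := by
      have := Nat.not_dvd_ordCompl hp hk.ne'
      have hcompl : k / p ^ s = u := by
        rw [hu, Nat.mul_div_cancel_left _ (pow_pos hp.pos s)]
      rwa [show ordCompl[p] k = u from hcompl] at this
    have hsr : s < r := by
      by_contra hcon
      push_neg at hcon
      have h1 : q ≤ p ^ s := by
        rw [hq]; exact Nat.pow_le_pow_right hp.pos hcon
      have h2 : p ^ s ≤ k := Nat.le_of_dvd hk (hu ▸ Dvd.intro u rfl)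
      omega
    have hunit : IsUnit ((u : ℕ) : WittVector p K) := by
      apply WittVector.isUnit_of_coeff_zero_ne_zero
      have hco : ((u : ℕ) : WittVector p K).coeff 0 = ((u : ℕ) : K) := by
        have : ((u : ℕ) : WittVector p K).coeff 0
            = WittVector.constantCoeff ((u : ℕ) : WittVector p K) := rfl
        rw [this, map_natCast]
      rw [hco]
      exact fun h0 => hune ((CharP.cast_eq_zero_iff K p u).1 h0)
    have hk_eq : p * k = p ^ (s + 1) * u := by rw [hu]; ring
    have hq_eq : q = p ^ (s + 1) * p ^ (r - (s + 1)) := by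
      rw [hq, ← pow_add]
      congr 1
      omega
    rw [hc, hk_eq, hq_eq, Nat.cast_mul, Nat.cast_mul, mul_assoc]
    exact mul_dvd_mul_left _ hunit.dvd
  refine ⟨main, fun k hk hndvd => ?_⟩
  by_contra hlt
  push_neg at hlt
  rw [lt_min_iff] at hlt
  have hkq : k < q := by exact_mod_cast hlt.2
  exact hndvd (main k hk hlt.1 hkq)
end
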